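/- For integers a ≥ 3 and m with 1 < m < a, the coin system (1, a, 2a-1, m(2a-1)-(a-1), m(2a-1), (2m-1)(2a-1)) is orderly. -/

import Mathlib

/-- The largest coin value in `C` that is at most `v` (or 0 if none). -/
def coinMax (C : List ℕ) (v : ℕ) : ℕ := (C.filter (· ≤ v)).foldr max 0

/-- Fuelled greedy coin count. -/
def grdAux (C : List ℕ) : ℕ → ℕ → ℕ
  | 0, _ => 0
  | fuel + 1, v =>
    let c := coinMax C v
    if v = 0 ∨ c = 0 then 0 else 1 + grdAux C fuel (v - c)

/-- Number of coins used by the greedy algorithm to represent `v` with coin system `C`. -/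
def grd (C : List ℕ) (v : ℕ) : ℕ := grdAux C v v

/-- The set of sizes of representations of `v` as nonnegative integer combinations of
the coin values in `C`. -/
def reprCosts (C : List ℕ) (v : ℕ) : Set ℕ :=
  {k | ∃ x : List ℕ, x.length = C.length ∧ (List.zipWith (· * ·) x C).sum = v ∧ x.sum = k}

/-- Minimum number of coins needed to represent `v` with coin system `C`. -/
noncomputable def opt (C : List ℕ) (v : ℕ) : ℕ := sInf (reprCosts C v)

/-- A coin system is orderly if greedy is optimal for every positive value. -/
def Orderly (C : List ℕ) : Prop := ∀ v : ℕ, 0 < v → grd C v = opt C v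

/- ---------- generic lemmas ---------- -/

lemma grdAux_congr (C : List ℕ) : ∀ v f g, v ≤ f → v ≤ g → grdAux C f v = grdAux C g v := by
  intro v
  induction v using Nat.strong_induction_on with
  | _ v ih =>
    intro f g hf hg
    match v, f, g with
    | 0, 0, 0 => rfl
    | 0, 0, g+1 => simp [grdAux]
    | 0, f+1, 0 => simp [grdAux]
    | 0, f+1, g+1 => simp [grdAux]
    | v+1, f+1, g+1 =>
      simp only [grdAux]
      by_cases hc : coinMax C (v+1) = 0
      · simp [hc]
      · rw [if_neg (by simp [hc]), if_neg (by simp [hc])]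
        have h1 : 1 ≤ coinMax C (v+1) := Nat.one_le_iff_ne_zero.mpr hc
        have := ih (v + 1 - coinMax C (v+1)) (by omega) f g (by omega) (by omega)
        omega

lemma grd_rec (C : List ℕ) (v : ℕ) (hv : 1 ≤ v) (hc : 1 ≤ coinMax C v) :
    grd C v = 1 + grd C (v - coinMax C v) := by
  obtain ⟨w, rfl⟩ : ∃ w, v = w + 1 := ⟨v - 1, by omega⟩
  show grdAux C (w+1) (w+1) = _
  simp only [grdAux]
  rw [if_neg (by omega)]
  congr 1
  exact grdAux_congr C _ _ _ (by omega) (by omega)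

lemma repr_intro (c1 c2 c3 c4 c5 c6 v x1 x2 x3 x4 x5 x6 : ℕ)
    (h : x1*c1 + x2*c2 + x3*c3 + x4*c4 + x5*c5 + x6*c6 = v) :
    (x1+x2+x3+x4+x5+x6) ∈ reprCosts [c1,c2,c3,c4,c5,c6] v := by
  refine ⟨[x1,x2,x3,x4,x5,x6], by simp, ?_, by simp; omega⟩
  simp [List.zipWith]
  omega

lemma repr_elim (c1 c2 c3 c4 c5 c6 v k : ℕ)
    (h : k ∈ reprCosts [c1,c2,c3,c4,c5,c6] v) :
    ∃ x1 x2 x3 x4 x5 x6, x1*c1 + x2*c2 + x3*c3 + x4*c4 + x5*c5 + x6*c6 = v ∧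
      x1+x2+x3+x4+x5+x6 = k := by
  obtain ⟨x, hlen, hsum, hk⟩ := h
  rcases x with _|⟨x1, _|⟨x2, _|⟨x3, _|⟨x4, _|⟨x5, _|⟨x6, _|⟨x7, t⟩⟩⟩⟩⟩⟩⟩ <;>
    simp at hlen
  refine ⟨x1,x2,x3,x4,x5,x6, ?_, ?_⟩
  · simp [List.zipWith] at hsum; omega
  · simp at hk; omega

lemma addmul (p q r B : ℕ) (h : p + q = r) : p*B + q*B = r*B := by
  rw [← add_mul, h]

lemma R1 (a u x1 x2 : ℕ) (ha : 3 ≤ a) (hu : x1 + x2*a = u) (hA : 2*a-1 ≤ u) :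
    ∃ y1 y2, y1 + y2*a = u - (2*a-1) ∧ y1 + y2 + 1 ≤ x1 + x2 := by
  rcases Nat.lt_or_ge x2 2 with h | h
  · obtain rfl | rfl : x2 = 0 ∨ x2 = 1 := by omega
    · exact ⟨x1 - (2*a-1), 0, by omega, by omega⟩
    · exact ⟨x1 - (a-1), 0, by simp at hu ⊢; omega, by omega⟩
  · obtain ⟨x2', rfl⟩ : ∃ x2', x2 = x2' + 2 := ⟨x2 - 2, by omega⟩
    have hx : (x2'+2)*a = x2'*a + 2*a := by rw [add_mul]
    exact ⟨x1 + 1, x2', by omega, by omega⟩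

lemma Riter (a : ℕ) (ha : 3 ≤ a) :
    ∀ s u x1 x2, x1 + x2*a = u → s*(2*a-1) ≤ u →
      ∃ y1 y2, y1 + y2*a = u - s*(2*a-1) ∧ y1 + y2 + s ≤ x1 + x2 := by
  intro s
  induction s with
  | zero => intro u x1 x2 h _; exact ⟨x1, x2, by omega, by omega⟩
  | succ s ih =>
    intro u x1 x2 h hs
    have hsm : (s+1)*(2*a-1) = s*(2*a-1) + (2*a-1) := by rw [add_mul]; omega
    obtain ⟨z1, z2, hz, hzc⟩ := R1 a u x1 x2 ha h (by omega)
    obtain ⟨y1, y2, hy, hyc⟩ := ih (u - (2*a-1)) z1 z2 hz (by omega)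
    exact ⟨y1, y2, by omega, by omega⟩

/- ---------- the specific coin system ---------- -/

def Cs (a m : ℕ) : List ℕ :=
  [1, a, 2 * a - 1, m * (2 * a - 1) - (a - 1), m * (2 * a - 1), (2 * m - 1) * (2 * a - 1)]

lemma cFacts (a m : ℕ) (hm : 2 ≤ m) :
    2*(2*a-1) ≤ m*(2*a-1) ∧ (2*m-1)*(2*a-1) + (2*a-1) = 2*(m*(2*a-1)) ∧
    (m-1)*(2*a-1) + (2*a-1) = m*(2*a-1) := by
  refine ⟨Nat.mul_le_mul (by omega) (le_refl _), ?_, ?_⟩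
  · have h : (2*m-1) + 1 = 2*m := by omega
    calc (2*m-1)*(2*a-1) + (2*a-1) = ((2*m-1)+1)*(2*a-1) := by rw [add_mul, one_mul]
      _ = 2*(m*(2*a-1)) := by rw [h, mul_assoc]
  · have h : (m-1) + 1 = m := by omega
    calc (m-1)*(2*a-1) + (2*a-1) = ((m-1)+1)*(2*a-1) := by rw [add_mul, one_mul]
      _ = m*(2*a-1) := by rw [h]

lemma cm6 (a m v : ℕ) (ha : 3 ≤ a) (hm : 2 ≤ m) (h : (2*m-1)*(2*a-1) ≤ v) :
    coinMax (Cs a m) v = (2*m-1)*(2*a-1) := by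
  obtain ⟨f1, f2, f3⟩ := cFacts a m hm
  have e1 : 1 ≤ v := by omega
  have e2 : a ≤ v := by omega
  have e3 : 2*a-1 ≤ v := by omega
  have e4 : m*(2*a-1)-(a-1) ≤ v := by omega
  have e5 : m*(2*a-1) ≤ v := by omega
  simp [Cs, coinMax, List.filter_cons, e1, e2, e3, e4, e5, h]
  rw [show max m (2*m-1) = 2*m-1 by omega]
  omega

lemma cm5 (a m v : ℕ) (ha : 3 ≤ a) (hm : 2 ≤ m) (h : m*(2*a-1) ≤ v)
    (h' : ¬ (2*m-1)*(2*a-1) ≤ v) : coinMax (Cs a m) v = m*(2*a-1) := by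
  obtain ⟨f1, f2, f3⟩ := cFacts a m hm
  have e1 : 1 ≤ v := by omega
  have e2 : a ≤ v := by omega
  have e3 : 2*a-1 ≤ v := by omega
  have e4 : m*(2*a-1)-(a-1) ≤ v := by omega
  simp [Cs, coinMax, List.filter_cons, e1, e2, e3, e4, h, h']
  omega

lemma cm4 (a m v : ℕ) (ha : 3 ≤ a) (hm : 2 ≤ m) (h : m*(2*a-1)-(a-1) ≤ v)
    (h' : ¬ m*(2*a-1) ≤ v) : coinMax (Cs a m) v = m*(2*a-1)-(a-1) := by
  obtain ⟨f1, f2, f3⟩ := cFacts a m hm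
  have e1 : 1 ≤ v := by omega
  have e2 : a ≤ v := by omega
  have e3 : 2*a-1 ≤ v := by omega
  have e6 : ¬ (2*m-1)*(2*a-1) ≤ v := by omega
  simp [Cs, coinMax, List.filter_cons, e1, e2, e3, h, h', e6]
  omega

lemma cm3 (a m v : ℕ) (ha : 3 ≤ a) (hm : 2 ≤ m) (h : 2*a-1 ≤ v)
    (h' : ¬ m*(2*a-1)-(a-1) ≤ v) : coinMax (Cs a m) v = 2*a-1 := by
  obtain ⟨f1, f2, f3⟩ := cFacts a m hm
  have e1 : 1 ≤ v := by omega
  have e2 : a ≤ v := by omega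
  have e5 : ¬ m*(2*a-1) ≤ v := by omega
  have e6 : ¬ (2*m-1)*(2*a-1) ≤ v := by omega
  simp [Cs, coinMax, List.filter_cons, e1, e2, h, h', e5, e6]
  omega

lemma cm2 (a m v : ℕ) (ha : 3 ≤ a) (hm : 2 ≤ m) (h : a ≤ v)
    (h' : ¬ 2*a-1 ≤ v) : coinMax (Cs a m) v = a := by
  obtain ⟨f1, f2, f3⟩ := cFacts a m hm
  have e1 : 1 ≤ v := by omega
  have e4 : ¬ m*(2*a-1)-(a-1) ≤ v := by omega
  have e5 : ¬ m*(2*a-1) ≤ v := by omega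
  have e6 : ¬ (2*m-1)*(2*a-1) ≤ v := by omega
  simp [Cs, coinMax, List.filter_cons, e1, h, h', e4, e5, e6]
  omega

lemma cm1 (a m v : ℕ) (ha : 3 ≤ a) (hm : 2 ≤ m) (h : 1 ≤ v)
    (h' : ¬ a ≤ v) : coinMax (Cs a m) v = 1 := by
  obtain ⟨f1, f2, f3⟩ := cFacts a m hm
  have e3 : ¬ 2*a-1 ≤ v := by omega
  have e4 : ¬ m*(2*a-1)-(a-1) ≤ v := by omega
  have e5 : ¬ m*(2*a-1) ≤ v := by omega
  have e6 : ¬ (2*m-1)*(2*a-1) ≤ v := by omega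
  simp [Cs, coinMax, List.filter_cons, h, h', e3, e4, e5, e6]

set_option maxHeartbeats 2000000 in
lemma lower (a m : ℕ) (ha : 3 ≤ a) (hm : 2 ≤ m) :
    ∀ v x1 x2 x3 x4 x5 x6,
      x1*1 + x2*a + x3*(2*a-1) + x4*(m*(2*a-1)-(a-1)) + x5*(m*(2*a-1))
        + x6*((2*m-1)*(2*a-1)) = v →
      grd (Cs a m) v ≤ x1+x2+x3+x4+x5+x6 := by
  intro v
  induction v using Nat.strong_induction_on with
  | _ v ih =>
    intro x1 x2 x3 x4 x5 x6 hrep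
    obtain ⟨f1, f2, f3⟩ := cFacts a m hm
    by_cases hv : v = 0
    · subst hv; simp [grd, grdAux]
    have hv1 : 1 ≤ v := by omega
    by_cases h6 : (2*m-1)*(2*a-1) ≤ v
    · -- Region 6 : coinMax = (2m-1)(2a-1)
      have hcm := cm6 a m v ha hm h6
      have hrec := grd_rec (Cs a m) v hv1 (by rw [hcm]; omega)
      rw [hcm] at hrec
      by_cases hx6 : 1 ≤ x6
      · obtain ⟨t, rfl⟩ : ∃ t, x6 = t+1 := ⟨x6-1, by omega⟩
        have e := add_mul t 1 ((2*m-1)*(2*a-1))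
        have hIH := ih (v - (2*m-1)*(2*a-1)) (by omega) x1 x2 x3 x4 x5 t (by omega)
        omega
      obtain rfl : x6 = 0 := by omega
      by_cases hx42 : 2 ≤ x4
      · obtain ⟨t, rfl⟩ : ∃ t, x4 = t+2 := ⟨x4-2, by omega⟩
        have e := add_mul t 2 (m*(2*a-1)-(a-1))
        have hIH := ih (v - (2*m-1)*(2*a-1)) (by omega) (x1+1) x2 x3 t x5 0
          (by have e1 := add_mul x1 1 1; omega)
        omega
      by_cases hx41 : x4 = 1
      · subst hx41
        by_cases hx5 : 1 ≤ x5
        · obtain ⟨t, rfl⟩ : ∃ t, x5 = t+1 := ⟨x5-1, by omega⟩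
          have e := add_mul t 1 (m*(2*a-1))
          have e2 := add_mul x2 1 a
          have hIH := ih (v - (2*m-1)*(2*a-1)) (by omega) x1 (x2+1) x3 0 t 0 (by omega)
          omega
        obtain rfl : x5 = 0 := by omega
        by_cases hx3 : m-1 ≤ x3
        · by_cases hx1 : a-1 ≤ x1
          · have e := addmul (x3-(m-1)) (m-1) x3 (2*a-1) (by omega)
            have hIH := ih (v - (2*m-1)*(2*a-1)) (by omega) (x1-(a-1)) x2 (x3-(m-1)) 0 0 0
              (by omega)
            omega
          by_cases hx2 : 1 ≤ x2
          · obtain ⟨t, rfl⟩ : ∃ t, x2 = t+1 := ⟨x2-1, by omega⟩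
            have e := add_mul t 1 a
            have e2 := addmul (x3-(m-1)) (m-1) x3 (2*a-1) (by omega)
            have e3 := add_mul x1 1 1
            have hIH := ih (v - (2*m-1)*(2*a-1)) (by omega) (x1+1) t (x3-(m-1)) 0 0 0
              (by omega)
            omega
          obtain rfl : x2 = 0 := by omega
          by_cases hx3m : m ≤ x3
          · have e := addmul (x3-m) m x3 (2*a-1) (by omega)
            have hIH := ih (v - (2*m-1)*(2*a-1)) (by omega) x1 1 (x3-m) 0 0 0 (by omega)
            omega
          · obtain rfl : x3 = m-1 := by omega
            omega
        · -- x3 ≤ m-2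
          have e := addmul (m-1-x3) x3 (m-1) (2*a-1) (by omega)
          obtain ⟨y1, y2, hy, hyc⟩ := Riter a ha (m-1-x3) (x1 + x2*a) x1 x2 rfl (by omega)
          by_cases hy1 : a-1 ≤ y1
          · have hIH := ih (v - (2*m-1)*(2*a-1)) (by omega) (y1-(a-1)) y2 0 0 0 0 (by omega)
            omega
          · by_cases hy20 : y2 = 0
            · subst hy20; omega
            obtain ⟨t, rfl⟩ : ∃ t, y2 = t+1 := ⟨y2-1, by omega⟩
            have e2 := add_mul t 1 a
            have hIH := ih (v - (2*m-1)*(2*a-1)) (by omega) (y1+1) t 0 0 0 0 (by omega)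
            omega
      · -- x4 = 0
        obtain rfl : x4 = 0 := by omega
        by_cases hx52 : 2 ≤ x5
        · obtain ⟨t, rfl⟩ : ∃ t, x5 = t+2 := ⟨x5-2, by omega⟩
          have e := add_mul t 2 (m*(2*a-1))
          have e2 := add_mul x3 1 (2*a-1)
          have hIH := ih (v - (2*m-1)*(2*a-1)) (by omega) x1 x2 (x3+1) 0 t 0 (by omega)
          omega
        by_cases hx51 : x5 = 1
        · subst hx51
          by_cases hx3 : m-1 ≤ x3
          · have e := addmul (x3-(m-1)) (m-1) x3 (2*a-1) (by omega)
            have hIH := ih (v - (2*m-1)*(2*a-1)) (by omega) x1 x2 (x3-(m-1)) 0 0 0 (by omega)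
            omega
          · have e := addmul (m-1-x3) x3 (m-1) (2*a-1) (by omega)
            obtain ⟨y1, y2, hy, hyc⟩ := Riter a ha (m-1-x3) (x1 + x2*a) x1 x2 rfl (by omega)
            have hIH := ih (v - (2*m-1)*(2*a-1)) (by omega) y1 y2 0 0 0 0 (by omega)
            omega
        · obtain rfl : x5 = 0 := by omega
          by_cases hx3 : 2*m-1 ≤ x3
          · have e := addmul (x3-(2*m-1)) (2*m-1) x3 (2*a-1) (by omega)
            have hIH := ih (v - (2*m-1)*(2*a-1)) (by omega) x1 x2 (x3-(2*m-1)) 0 0 0 (by omega)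
            omega
          · have e := addmul (2*m-1-x3) x3 (2*m-1) (2*a-1) (by omega)
            obtain ⟨y1, y2, hy, hyc⟩ := Riter a ha (2*m-1-x3) (x1 + x2*a) x1 x2 rfl (by omega)
            have hIH := ih (v - (2*m-1)*(2*a-1)) (by omega) y1 y2 0 0 0 0 (by omega)
            omega
    by_cases h5 : m*(2*a-1) ≤ v
    · -- Region 5 : coinMax = m(2a-1)
      have hcm := cm5 a m v ha hm h5 h6
      have hrec := grd_rec (Cs a m) v hv1 (by rw [hcm]; omega)
      rw [hcm] at hrec
      obtain rfl : x6 = 0 := by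
        by_contra hc
        have := Nat.le_mul_of_pos_left ((2*m-1)*(2*a-1)) (show 0 < x6 by omega)
        omega
      by_cases hx5 : 1 ≤ x5
      · obtain ⟨t, rfl⟩ : ∃ t, x5 = t+1 := ⟨x5-1, by omega⟩
        have e := add_mul t 1 (m*(2*a-1))
        have hIH := ih (v - m*(2*a-1)) (by omega) x1 x2 x3 x4 t 0 (by omega)
        omega
      obtain rfl : x5 = 0 := by omega
      have hx4le : x4 ≤ 1 := by
        by_contra hc
        have := Nat.mul_le_mul (show 2 ≤ x4 by omega) (le_refl (m*(2*a-1)-(a-1)))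
        omega
      by_cases hx41 : x4 = 1
      · subst hx41
        by_cases hx1 : a-1 ≤ x1
        · have hIH := ih (v - m*(2*a-1)) (by omega) (x1-(a-1)) x2 x3 0 0 0 (by omega)
          omega
        by_cases hx2 : 1 ≤ x2
        · obtain ⟨t, rfl⟩ : ∃ t, x2 = t+1 := ⟨x2-1, by omega⟩
          have e := add_mul t 1 a
          have e2 := add_mul x1 1 1
          have hIH := ih (v - m*(2*a-1)) (by omega) (x1+1) t x3 0 0 0 (by omega)
          omega
        obtain rfl : x2 = 0 := by omega
        by_cases hx3 : 1 ≤ x3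
        · obtain ⟨t, rfl⟩ : ∃ t, x3 = t+1 := ⟨x3-1, by omega⟩
          have e := add_mul t 1 (2*a-1)
          have e2 := add_mul (0:ℕ) 1 a
          have hIH := ih (v - m*(2*a-1)) (by omega) x1 1 t 0 0 0 (by omega)
          omega
        · obtain rfl : x3 = 0 := by omega
          omega
      · obtain rfl : x4 = 0 := by omega
        by_cases hx3 : m ≤ x3
        · have e := addmul (x3-m) m x3 (2*a-1) (by omega)
          have hIH := ih (v - m*(2*a-1)) (by omega) x1 x2 (x3-m) 0 0 0 (by omega)
          omega
        · have e := addmul (m-x3) x3 m (2*a-1) (by omega)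
          obtain ⟨y1, y2, hy, hyc⟩ := Riter a ha (m-x3) (x1 + x2*a) x1 x2 rfl (by omega)
          have hIH := ih (v - m*(2*a-1)) (by omega) y1 y2 0 0 0 0 (by omega)
          omega
    by_cases h4 : m*(2*a-1)-(a-1) ≤ v
    · -- Region 4 : coinMax = m(2a-1)-(a-1)
      have hcm := cm4 a m v ha hm h4 h5
      have hrec := grd_rec (Cs a m) v hv1 (by rw [hcm]; omega)
      rw [hcm] at hrec
      obtain rfl : x6 = 0 := by
        by_contra hc
        have := Nat.le_mul_of_pos_left ((2*m-1)*(2*a-1)) (show 0 < x6 by omega)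
        omega
      obtain rfl : x5 = 0 := by
        by_contra hc
        have := Nat.le_mul_of_pos_left (m*(2*a-1)) (show 0 < x5 by omega)
        omega
      by_cases hx4 : 1 ≤ x4
      · obtain ⟨t, rfl⟩ : ∃ t, x4 = t+1 := ⟨x4-1, by omega⟩
        have e := add_mul t 1 (m*(2*a-1)-(a-1))
        have hIH := ih (v - (m*(2*a-1)-(a-1))) (by omega) x1 x2 x3 t 0 0 (by omega)
        omega
      obtain rfl : x4 = 0 := by omega
      have hx3m : x3 < m := by
        by_contra hc
        have := Nat.mul_le_mul (show m ≤ x3 by omega) (le_refl (2*a-1))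
        omega
      have e := addmul (m-1-x3) x3 (m-1) (2*a-1) (by omega)
      obtain ⟨y1, y2, hy, hyc⟩ := Riter a ha (m-1-x3) (x1 + x2*a) x1 x2 rfl (by omega)
      by_cases hy20 : y2 = 0
      · subst hy20
        have hIH := ih (v - (m*(2*a-1)-(a-1))) (by omega) (y1-a) 0 0 0 0 0 (by omega)
        omega
      · obtain ⟨t, rfl⟩ : ∃ t, y2 = t+1 := ⟨y2-1, by omega⟩
        have e2 := add_mul t 1 a
        have hIH := ih (v - (m*(2*a-1)-(a-1))) (by omega) y1 t 0 0 0 0 (by omega)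
        omega
    by_cases h3 : 2*a-1 ≤ v
    · -- Region 3 : coinMax = 2a-1
      have hcm := cm3 a m v ha hm h3 h4
      have hrec := grd_rec (Cs a m) v hv1 (by rw [hcm]; omega)
      rw [hcm] at hrec
      obtain rfl : x6 = 0 := by
        by_contra hc
        have := Nat.le_mul_of_pos_left ((2*m-1)*(2*a-1)) (show 0 < x6 by omega)
        omega
      obtain rfl : x5 = 0 := by
        by_contra hc
        have := Nat.le_mul_of_pos_left (m*(2*a-1)) (show 0 < x5 by omega)
        omega
      obtain rfl : x4 = 0 := by
        by_contra hc
        have := Nat.le_mul_of_pos_left (m*(2*a-1)-(a-1)) (show 0 < x4 by omega)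
        omega
      by_cases hx3 : 1 ≤ x3
      · obtain ⟨t, rfl⟩ : ∃ t, x3 = t+1 := ⟨x3-1, by omega⟩
        have e := add_mul t 1 (2*a-1)
        have hIH := ih (v - (2*a-1)) (by omega) x1 x2 t 0 0 0 (by omega)
        omega
      · obtain rfl : x3 = 0 := by omega
        obtain ⟨y1, y2, hy, hyc⟩ := R1 a (x1 + x2*a) x1 x2 ha rfl (by omega)
        have hIH := ih (v - (2*a-1)) (by omega) y1 y2 0 0 0 0 (by omega)
        omega
    by_cases h2 : a ≤ v
    · -- Region 2 : coinMax = a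
      have hcm := cm2 a m v ha hm h2 h3
      have hrec := grd_rec (Cs a m) v hv1 (by rw [hcm]; omega)
      rw [hcm] at hrec
      obtain rfl : x6 = 0 := by
        by_contra hc
        have := Nat.le_mul_of_pos_left ((2*m-1)*(2*a-1)) (show 0 < x6 by omega)
        omega
      obtain rfl : x5 = 0 := by
        by_contra hc
        have := Nat.le_mul_of_pos_left (m*(2*a-1)) (show 0 < x5 by omega)
        omega
      obtain rfl : x4 = 0 := by
        by_contra hc
        have := Nat.le_mul_of_pos_left (m*(2*a-1)-(a-1)) (show 0 < x4 by omega)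
        omega
      obtain rfl : x3 = 0 := by
        by_contra hc
        have := Nat.le_mul_of_pos_left (2*a-1) (show 0 < x3 by omega)
        omega
      by_cases hx2 : 1 ≤ x2
      · obtain ⟨t, rfl⟩ : ∃ t, x2 = t+1 := ⟨x2-1, by omega⟩
        have e := add_mul t 1 a
        have hIH := ih (v - a) (by omega) x1 t 0 0 0 0 (by omega)
        omega
      · obtain rfl : x2 = 0 := by omega
        have hIH := ih (v - a) (by omega) (x1-a) 0 0 0 0 0 (by omega)
        omega
    · -- Region 1 : coinMax = 1
      have hcm := cm1 a m v ha hm hv1 h2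
      have hrec := grd_rec (Cs a m) v hv1 (by rw [hcm])
      rw [hcm] at hrec
      obtain rfl : x6 = 0 := by
        by_contra hc
        have := Nat.le_mul_of_pos_left ((2*m-1)*(2*a-1)) (show 0 < x6 by omega)
        omega
      obtain rfl : x5 = 0 := by
        by_contra hc
        have := Nat.le_mul_of_pos_left (m*(2*a-1)) (show 0 < x5 by omega)
        omega
      obtain rfl : x4 = 0 := by
        by_contra hc
        have := Nat.le_mul_of_pos_left (m*(2*a-1)-(a-1)) (show 0 < x4 by omega)
        omega
      obtain rfl : x3 = 0 := by
        by_contra hc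
        have := Nat.le_mul_of_pos_left (2*a-1) (show 0 < x3 by omega)
        omega
      obtain rfl : x2 = 0 := by
        by_contra hc
        have := Nat.le_mul_of_pos_left a (show 0 < x2 by omega)
        omega
      have hIH := ih (v - 1) (by omega) (x1-1) 0 0 0 0 0 (by omega)
      omega

set_option maxHeartbeats 1000000 in
lemma upper (a m : ℕ) (ha : 3 ≤ a) (hm : 2 ≤ m) :
    ∀ v, grd (Cs a m) v ∈ reprCosts (Cs a m) v := by
  intro v
  induction v using Nat.strong_induction_on with
  | _ v ih =>
    obtain ⟨f1, f2, f3⟩ := cFacts a m hm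
    by_cases hv : v = 0
    · subst hv
      have h0 : grd (Cs a m) 0 = 0 := rfl
      rw [h0]
      have := repr_intro 1 a (2*a-1) (m*(2*a-1)-(a-1)) (m*(2*a-1)) ((2*m-1)*(2*a-1))
        0 0 0 0 0 0 0 (by omega)
      simpa [Cs] using this
    have hv1 : 1 ≤ v := by omega
    by_cases h6 : (2*m-1)*(2*a-1) ≤ v
    · have hcm := cm6 a m v ha hm h6
      have hrec := grd_rec (Cs a m) v hv1 (by rw [hcm]; omega)
      rw [hcm] at hrec
      obtain ⟨x1,x2,x3,x4,x5,x6,heq,hsum⟩ :=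
        repr_elim 1 a (2*a-1) (m*(2*a-1)-(a-1)) (m*(2*a-1)) ((2*m-1)*(2*a-1)) _ _
          (ih (v - (2*m-1)*(2*a-1)) (by omega))
      have e := add_mul x6 1 ((2*m-1)*(2*a-1))
      have hmem := repr_intro 1 a (2*a-1) (m*(2*a-1)-(a-1)) (m*(2*a-1)) ((2*m-1)*(2*a-1))
        v x1 x2 x3 x4 x5 (x6+1) (by omega)
      have hg : grd (Cs a m) v = x1+x2+x3+x4+x5+(x6+1) := by omega
      rw [hg]; exact hmem
    by_cases h5 : m*(2*a-1) ≤ v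
    · have hcm := cm5 a m v ha hm h5 h6
      have hrec := grd_rec (Cs a m) v hv1 (by rw [hcm]; omega)
      rw [hcm] at hrec
      obtain ⟨x1,x2,x3,x4,x5,x6,heq,hsum⟩ :=
        repr_elim 1 a (2*a-1) (m*(2*a-1)-(a-1)) (m*(2*a-1)) ((2*m-1)*(2*a-1)) _ _
          (ih (v - m*(2*a-1)) (by omega))
      have e := add_mul x5 1 (m*(2*a-1))
      have hmem := repr_intro 1 a (2*a-1) (m*(2*a-1)-(a-1)) (m*(2*a-1)) ((2*m-1)*(2*a-1))
        v x1 x2 x3 x4 (x5+1) x6 (by omega)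
      have hg : grd (Cs a m) v = x1+x2+x3+x4+(x5+1)+x6 := by omega
      rw [hg]; exact hmem
    by_cases h4 : m*(2*a-1)-(a-1) ≤ v
    · have hcm := cm4 a m v ha hm h4 h5
      have hrec := grd_rec (Cs a m) v hv1 (by rw [hcm]; omega)
      rw [hcm] at hrec
      obtain ⟨x1,x2,x3,x4,x5,x6,heq,hsum⟩ :=
        repr_elim 1 a (2*a-1) (m*(2*a-1)-(a-1)) (m*(2*a-1)) ((2*m-1)*(2*a-1)) _ _
          (ih (v - (m*(2*a-1)-(a-1))) (by omega))
      have e := add_mul x4 1 (m*(2*a-1)-(a-1))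
      have hmem := repr_intro 1 a (2*a-1) (m*(2*a-1)-(a-1)) (m*(2*a-1)) ((2*m-1)*(2*a-1))
        v x1 x2 x3 (x4+1) x5 x6 (by omega)
      have hg : grd (Cs a m) v = x1+x2+x3+(x4+1)+x5+x6 := by omega
      rw [hg]; exact hmem
    by_cases h3 : 2*a-1 ≤ v
    · have hcm := cm3 a m v ha hm h3 h4
      have hrec := grd_rec (Cs a m) v hv1 (by rw [hcm]; omega)
      rw [hcm] at hrec
      obtain ⟨x1,x2,x3,x4,x5,x6,heq,hsum⟩ :=
        repr_elim 1 a (2*a-1) (m*(2*a-1)-(a-1)) (m*(2*a-1)) ((2*m-1)*(2*a-1)) _ _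
          (ih (v - (2*a-1)) (by omega))
      have e := add_mul x3 1 (2*a-1)
      have hmem := repr_intro 1 a (2*a-1) (m*(2*a-1)-(a-1)) (m*(2*a-1)) ((2*m-1)*(2*a-1))
        v x1 x2 (x3+1) x4 x5 x6 (by omega)
      have hg : grd (Cs a m) v = x1+x2+(x3+1)+x4+x5+x6 := by omega
      rw [hg]; exact hmem
    by_cases h2 : a ≤ v
    · have hcm := cm2 a m v ha hm h2 h3
      have hrec := grd_rec (Cs a m) v hv1 (by rw [hcm]; omega)
      rw [hcm] at hrec
      obtain ⟨x1,x2,x3,x4,x5,x6,heq,hsum⟩ :=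
        repr_elim 1 a (2*a-1) (m*(2*a-1)-(a-1)) (m*(2*a-1)) ((2*m-1)*(2*a-1)) _ _
          (ih (v - a) (by omega))
      have e := add_mul x2 1 a
      have hmem := repr_intro 1 a (2*a-1) (m*(2*a-1)-(a-1)) (m*(2*a-1)) ((2*m-1)*(2*a-1))
        v x1 (x2+1) x3 x4 x5 x6 (by omega)
      have hg : grd (Cs a m) v = x1+(x2+1)+x3+x4+x5+x6 := by omega
      rw [hg]; exact hmem
    · have hcm := cm1 a m v ha hm hv1 h2
      have hrec := grd_rec (Cs a m) v hv1 (by rw [hcm])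
      rw [hcm] at hrec
      obtain ⟨x1,x2,x3,x4,x5,x6,heq,hsum⟩ :=
        repr_elim 1 a (2*a-1) (m*(2*a-1)-(a-1)) (m*(2*a-1)) ((2*m-1)*(2*a-1)) _ _
          (ih (v - 1) (by omega))
      have e := add_mul x1 1 1
      have hmem := repr_intro 1 a (2*a-1) (m*(2*a-1)-(a-1)) (m*(2*a-1)) ((2*m-1)*(2*a-1))
        v (x1+1) x2 x3 x4 x5 x6 (by omega)
      have hg : grd (Cs a m) v = (x1+1)+x2+x3+x4+x5+x6 := by omega
      rw [hg]; exact hmem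

theorem stmt_16 (a m : ℕ) (ha : 3 ≤ a) (hm1 : 1 < m) (hma : m < a) :
    Orderly [1, a, 2 * a - 1, m * (2 * a - 1) - (a - 1), m * (2 * a - 1),
      (2 * m - 1) * (2 * a - 1)] := by
  have hm : 2 ≤ m := hm1
  intro v hv
  show grd (Cs a m) v = sInf (reprCosts (Cs a m) v)
  have hub := upper a m ha hm v
  have hlb : ∀ k ∈ reprCosts (Cs a m) v, grd (Cs a m) v ≤ k := by
    intro k hk
    obtain ⟨x1,x2,x3,x4,x5,x6,heq,hsum⟩ :=
      repr_elim 1 a (2*a-1) (m*(2*a-1)-(a-1)) (m*(2*a-1)) ((2*m-1)*(2*a-1)) v k hk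
    have := lower a m ha hm v x1 x2 x3 x4 x5 x6 heq
    omega
  exact le_antisymm (le_csInf ⟨_, hub⟩ hlb) (Nat.sInf_le hub)
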